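/- Let S be a slice of Q̃^{(d,n)}, i.e. a full subquiver meeting each ν_d-orbit exactly once (ν_d : A ↦ A − (1,…,1)) and convex. Then the image π(S_0) ⊂ N(n+2d+1, d) is a pairwise non-intertwining collection of d-simplices of cardinality equal to the number of ν_d-orbits, and hence gives a triangulation of the cyclic polytope C(n+2d+1, 2d). -/

import Mathlib

/-- `Dset m d A`: the set Ď(m,d) of (d+1)-tuples of integers with consecutive
gaps ≥ 2, cyclically (a_d + 2 ≤ a_0 + m). -/
def Dset (m d : ℕ) (A : Fin (d+1) → ℤ) : Prop :=
  (∀ i : Fin d, A i.castSucc + 2 ≤ A i.succ) ∧ A (Fin.last d) + 2 ≤ A 0 + (m : ℤ)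

/-- Reduction mod m with representatives in {1, …, m}. -/
def pimod (m : ℕ) (a : ℤ) : ℤ := (a - 1) % (m : ℤ) + 1

/-- Intertwining X ⋏ Y of two (d+1)-tuples regarded as cyclically ordered
d-simplices with entries mod m: for some cyclic shift l of the order on [m] and
cyclic rotations p, q of the index sets, the entries interleave strictly:
x_0 <_l y_0 <_l x_1 <_l ⋯ <_l x_d <_l y_d. -/
def Intertw (m d : ℕ) (X Y : Fin (d+1) → ℤ) : Prop :=
  ∃ l : ℤ, ∃ p q : Fin (d+1),
    (∀ i : Fin (d+1), (X (i + p) - l) % (m : ℤ) < (Y (i + q) - l) % (m : ℤ)) ∧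
    (∀ i : Fin d, (Y (i.castSucc + q) - l) % (m : ℤ) < (X (i.succ + p) - l) % (m : ℤ))

/-- i-th standard basis vector of ℤ^{d+1}. -/
def Evec (d : ℕ) (i : Fin (d+1)) : Fin (d+1) → ℤ := fun j => if j = i then 1 else 0

/-- Arrows of the quiver Q̃^{(d,n)} (with m = n + 2d + 1): A → A + E_i whenever
both endpoints are vertices. -/
def TArrow (m d : ℕ) (A B : Fin (d+1) → ℤ) : Prop :=
  Dset m d A ∧ Dset m d B ∧ ∃ i : Fin (d+1), B = A + Evec d i

/-- The ν_d-orbit equivalence on the vertices of Q̃^{(d,n)} (ν_d : A ↦ A - (1,…,1)):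
A ~ B iff B = A + k·(1,…,1) for some k ∈ ℤ. -/
def nuSetoid (m d : ℕ) : Setoid {A : Fin (d+1) → ℤ // Dset m d A} where
  r A B := ∃ k : ℤ, ∀ j, B.1 j = A.1 j + k
  iseqv := by
    refine ⟨fun A => ⟨0, by simp⟩, ?_, ?_⟩
    · rintro A B ⟨k, h⟩
      exact ⟨-k, fun j => by rw [h j]; ring⟩
    · rintro A B C ⟨k, h⟩ ⟨k', h'⟩
      exact ⟨k + k', fun j => by rw [h' j, h j]; ring⟩

/-! ### Auxiliary lemmas -/

lemma int_band (m x : ℤ) (hm : 0 < m) (h1 : -m < m * x) (h2 : m * x < m) : x = 0 := by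
  rcases lt_trichotomy x 0 with h | h | h
  · have hx : x ≤ -1 := by omega
    have h3 : m * x ≤ m * (-1) := mul_le_mul_of_nonneg_left hx hm.le
    have : m * (-1) = -m := by ring
    omega
  · exact h
  · have hx : (1:ℤ) ≤ x := by omega
    have h3 : m * 1 ≤ m * x := mul_le_mul_of_nonneg_left hx hm.le
    have : m * 1 = m := by ring
    omega

lemma Dset_strictMono {m d : ℕ} {A : Fin (d+1) → ℤ} (hA : Dset m d A) : StrictMono A :=
  Fin.strictMono_iff_lt_succ.mpr (fun i => by have := hA.1 i; omega)

lemma Dset_lo {m d : ℕ} {A : Fin (d+1) → ℤ} (hA : Dset m d A) :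
    ∀ j : Fin (d+1), A 0 + 2 * ((j : ℕ) : ℤ) ≤ A j := by
  intro j
  induction j using Fin.induction with
  | zero => simp
  | succ i ih =>
    have h := hA.1 i
    have hv : ((i.succ : ℕ) : ℤ) = ((i.castSucc : ℕ) : ℤ) + 1 := by
      simp [Fin.val_succ, Fin.coe_castSucc]
    omega

lemma Dset_hi {m d : ℕ} {A : Fin (d+1) → ℤ} (hA : Dset m d A) :
    ∀ j : Fin (d+1), A j + 2 * ((d : ℤ) - ((j : ℕ) : ℤ)) ≤ A (Fin.last d) := by
  intro j
  induction j using Fin.reverseInduction with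
  | last => simp
  | cast i ih =>
    have h := hA.1 i
    have hv : ((i.succ : ℕ) : ℤ) = ((i.castSucc : ℕ) : ℤ) + 1 := by
      simp [Fin.val_succ, Fin.coe_castSucc]
    omega

lemma Dset_m_ge {m d : ℕ} {A : Fin (d+1) → ℤ} (hA : Dset m d A) : 2 * d + 2 ≤ m := by
  have h1 := Dset_lo hA (Fin.last d)
  have h2 := hA.2
  simp only [Fin.val_last] at h1
  omega

lemma Dset_shift {m d : ℕ} {A : Fin (d+1) → ℤ} (hA : Dset m d A) (c : ℤ) :
    Dset m d (fun j => A j + c) := by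
  refine ⟨fun i => ?_, ?_⟩
  · show A i.castSucc + c + 2 ≤ A i.succ + c
    have := hA.1 i; omega
  · show A (Fin.last d) + c + 2 ≤ A 0 + c + (m : ℤ)
    have := hA.2; omega

/-! ### The rotation operator -/

/-- Value of the canonical `ℤ`-indexed extension of `X` (period `d+1` up to adding `m`). -/
def Rval (m d : ℕ) (X : Fin (d+1) → ℤ) (t : ℤ) : ℤ :=
  X ⟨(t % ((d:ℤ)+1)).toNat, by
    have h1 : (0:ℤ) < (d:ℤ)+1 := by positivity
    have h2 := Int.emod_nonneg t (ne_of_gt h1)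
    have h3 := Int.emod_lt_of_pos t h1
    omega⟩ + (m : ℤ) * (t / ((d:ℤ)+1))

/-- Rotation by `e` of an element of Ď. -/
def Rrot (m d : ℕ) (e : ℤ) (X : Fin (d+1) → ℤ) : Fin (d+1) → ℤ :=
  fun j => Rval m d X (((j : ℕ) : ℤ) + e)

lemma Rval_shift (m d : ℕ) (X : Fin (d+1) → ℤ) (t k : ℤ) :
    Rval m d X (t + ((d:ℤ)+1) * k) = Rval m d X t + (m:ℤ) * k := by
  have hb : ((d:ℤ)+1) ≠ 0 := by positivity
  unfold Rval
  have h1 : (t + ((d:ℤ)+1) * k) % ((d:ℤ)+1) = t % ((d:ℤ)+1) := Int.add_mul_emod_self_left ..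
  have h2 : (t + ((d:ℤ)+1) * k) / ((d:ℤ)+1) = t / ((d:ℤ)+1) + k := Int.add_mul_ediv_left t k hb
  simp only [h1, h2]
  ring

lemma Rval_small' (m d : ℕ) (X : Fin (d+1) → ℤ) (t : ℤ) (h0 : 0 ≤ t) (h1 : t < (d:ℤ)+1) :
    Rval m d X t = X ⟨t.toNat, by omega⟩ := by
  have e1 : t % ((d:ℤ)+1) = t := Int.emod_eq_of_lt h0 h1
  have e2 : t / ((d:ℤ)+1) = 0 := Int.ediv_eq_zero_of_lt h0 h1
  unfold Rval
  simp only [e1, e2, mul_zero, add_zero]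

lemma Rval_small (m d : ℕ) (X : Fin (d+1) → ℤ) (j : Fin (d+1)) :
    Rval m d X ((j : ℕ) : ℤ) = X j := by
  rw [Rval_small' m d X _ (by positivity) (by have := j.isLt; omega)]
  exact congrArg X (Fin.ext (by simp))

lemma Rval_step {m d : ℕ} {X : Fin (d+1) → ℤ} (hX : Dset m d X) (t : ℤ) :
    Rval m d X t + 2 ≤ Rval m d X (t + 1) := by
  have hb : (0:ℤ) < (d:ℤ)+1 := by positivity
  obtain ⟨q, r, hrt, hr0, hr1⟩ : ∃ q r : ℤ, t = r + ((d:ℤ)+1) * q ∧ 0 ≤ r ∧ r < (d:ℤ)+1 :=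
    ⟨t / ((d:ℤ)+1), t % ((d:ℤ)+1),
      by have := Int.mul_ediv_add_emod t ((d:ℤ)+1); omega,
      Int.emod_nonneg _ (ne_of_gt hb), Int.emod_lt_of_pos _ hb⟩
  subst hrt
  have e1 : Rval m d X (r + ((d:ℤ)+1) * q) = Rval m d X r + (m:ℤ) * q := Rval_shift ..
  by_cases hcase : r < (d : ℤ)
  · have e2 : Rval m d X (r + ((d:ℤ)+1) * q + 1) = Rval m d X (r+1) + (m:ℤ) * q := by
      rw [show r + ((d:ℤ)+1) * q + 1 = (r + 1) + ((d:ℤ)+1) * q by ring, Rval_shift]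
    rw [e1, e2]
    have hfin : r.toNat < d := by omega
    have hgap := hX.1 ⟨r.toNat, hfin⟩
    have hv1 : Rval m d X r = X (Fin.castSucc ⟨r.toNat, hfin⟩) := by
      rw [Rval_small' m d X r hr0 hr1]
      exact congrArg X (Fin.ext (by simp only [Fin.coe_castSucc]))
    have hv2 : Rval m d X (r+1) = X (Fin.succ ⟨r.toNat, hfin⟩) := by
      rw [Rval_small' m d X (r+1) (by omega) (by omega)]
      exact congrArg X (Fin.ext (by simp only [Fin.val_succ]; omega))
    rw [hv1, hv2]
    omega
  · have hrd : r = (d : ℤ) := by omega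
    have e2 : Rval m d X (r + ((d:ℤ)+1) * q + 1) = Rval m d X 0 + (m:ℤ) * (q + 1) := by
      rw [show r + ((d:ℤ)+1) * q + 1 = 0 + ((d:ℤ)+1) * (q + 1) by rw [hrd]; ring, Rval_shift]
    rw [e1, e2]
    have hv1 : Rval m d X r = X (Fin.last d) := by
      rw [Rval_small' m d X r hr0 hr1]
      exact congrArg X (Fin.ext (by simp only [Fin.val_last]; omega))
    have hv2 : Rval m d X 0 = X 0 := by
      rw [Rval_small' m d X 0 le_rfl (by omega)]
      exact congrArg X (Fin.ext (by simp))
    have := hX.2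
    rw [hv1, hv2]
    have hmq : (m:ℤ) * (q+1) = (m:ℤ)*q + m := by ring
    omega

lemma Rval_mono {m d : ℕ} {X : Fin (d+1) → ℤ} (hX : Dset m d X) {s t : ℤ} (h : s ≤ t) :
    Rval m d X s ≤ Rval m d X t := by
  have key : ∀ n : ℕ, ∀ s : ℤ, Rval m d X s ≤ Rval m d X (s + n) := by
    intro n
    induction n with
    | zero => intro s; simp
    | succ k ih =>
      intro s
      have h1 := ih s
      have h2 := Rval_step hX (s + k)
      have e : (((k+1):ℕ):ℤ) = (k:ℤ)+1 := by push_cast; ring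
      rw [e, show s + ((k:ℤ)+1) = (s + (k:ℤ)) + 1 by ring]
      omega
  have hk := key (t - s).toNat s
  have ht : s + (((t - s).toNat : ℕ) : ℤ) = t := by omega
  rwa [ht] at hk

lemma Rrot_zero (m d : ℕ) (X : Fin (d+1) → ℤ) : Rrot m d 0 X = X := by
  funext j
  unfold Rrot
  rw [add_zero, Rval_small]

lemma Rrot_apply_eq_Rval (m d : ℕ) (e : ℤ) (X : Fin (d+1) → ℤ) (j : Fin (d+1)) :
    Rrot m d e X j = Rval m d X (((j:ℕ):ℤ) + e) := rfl

lemma Rrot_comp (m d : ℕ) (e f : ℤ) (X : Fin (d+1) → ℤ) :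
    Rrot m d e (Rrot m d f X) = Rrot m d (e + f) X := by
  have hb : (0:ℤ) < (d:ℤ)+1 := by positivity
  funext j
  unfold Rrot Rval
  simp only []
  set t : ℤ := ((j:ℕ):ℤ) + e with ht
  have h0 : 0 ≤ t % ((d:ℤ)+1) := Int.emod_nonneg t (ne_of_gt hb)
  have hcoe : (((⟨(t % ((d:ℤ)+1)).toNat, by
      have := Int.emod_lt_of_pos t hb; omega⟩ : Fin (d+1)) : ℕ) : ℤ) = t % ((d:ℤ)+1) := by
    simp; omega
  rw [hcoe]
  have key : Rval m d X (t % ((d:ℤ)+1) + f) + (m:ℤ) * (t / ((d:ℤ)+1)) =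
      Rval m d X (t + f) := by
    have : t + f = (t % ((d:ℤ)+1) + f) + ((d:ℤ)+1) * (t / ((d:ℤ)+1)) := by
      have := Int.mul_ediv_add_emod t ((d:ℤ)+1); omega
    rw [this, Rval_shift]
  show Rval m d X _ + (m:ℤ) * _ = _
  rw [key]
  congr 1
  ring

lemma Rrot_succ_cast (m d : ℕ) (e : ℤ) (X : Fin (d+1) → ℤ) (i : Fin d) :
    Rrot m d (e+1) X i.castSucc = Rrot m d e X i.succ := by
  unfold Rrot
  congr 1
  simp [Fin.coe_castSucc, Fin.val_succ]
  ring

lemma Rrot_last (m d : ℕ) (e : ℤ) (X : Fin (d+1) → ℤ) :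
    Rrot m d (e+1) X (Fin.last d) = Rrot m d e X 0 + m := by
  unfold Rrot
  have h : ((Fin.last d : Fin (d+1)) : ℕ) = d := Fin.val_last d
  have h0 : (((0 : Fin (d+1)) : ℕ) : ℤ) = 0 := by simp
  rw [h, h0]
  have : ((d:ℕ):ℤ) + (e + 1) = (0 + e) + ((d:ℤ)+1) * 1 := by ring
  rw [this, Rval_shift]
  ring

lemma Rrot_lt_of_lt (m d : ℕ) (e : ℤ) {X Y : Fin (d+1) → ℤ} (h : ∀ j, X j < Y j) :
    ∀ j, Rrot m d e X j < Rrot m d e Y j := by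
  intro j
  unfold Rrot Rval
  have := h ⟨((((j:ℕ):ℤ) + e) % ((d:ℤ)+1)).toNat, by
    have hb : (0:ℤ) < (d:ℤ)+1 := by positivity
    have := Int.emod_nonneg (((j:ℕ):ℤ) + e) (ne_of_gt hb)
    have := Int.emod_lt_of_pos (((j:ℕ):ℤ) + e) hb
    omega⟩
  omega

lemma Rrot_ge_of_nonneg {m d : ℕ} {X : Fin (d+1) → ℤ} (hX : Dset m d X) {f : ℤ}
    (hf : 0 ≤ f) : ∀ j, X j ≤ Rrot m d f X j := by
  intro j
  rw [Rrot_apply_eq_Rval]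
  calc X j = Rval m d X ((j:ℕ):ℤ) := (Rval_small m d X j).symm
    _ ≤ Rval m d X (((j:ℕ):ℤ) + f) := Rval_mono hX (by omega)

lemma Rrot_le_of_nonpos {m d : ℕ} {X : Fin (d+1) → ℤ} (hX : Dset m d X) {f : ℤ}
    (hf : f ≤ 0) : ∀ j, Rrot m d f X j ≤ X j := by
  intro j
  rw [Rrot_apply_eq_Rval]
  calc Rval m d X (((j:ℕ):ℤ) + f) ≤ Rval m d X ((j:ℕ):ℤ) := Rval_mono hX (by omega)
    _ = X j := Rval_small m d X j

/-! ### Lifting an intertwining datum to a rotation -/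

lemma pimod_emod (m : ℕ) (a l : ℤ) : (pimod m a - l) % (m:ℤ) = (a - l) % (m:ℤ) := by
  unfold pimod
  have h1 : (a - 1) % (m:ℤ) % (m:ℤ) = (a - 1) % (m:ℤ) := Int.emod_emod_of_dvd _ dvd_rfl
  have h2 : ((a - 1) % (m:ℤ)) ≡ (a - 1) [ZMOD (m:ℤ)] := h1
  have h3 := (h2.add_right 1).sub_right l
  have h4 : ((a-1) % (m:ℤ) + 1 - l) % (m:ℤ) = (a - 1 + 1 - l) % (m:ℤ) := h3
  rw [h4]
  congr 1
  ring

lemma fin_add_val (d : ℕ) (x y : Fin (d+1)) :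
    ((x + y : Fin (d+1)) : ℕ) =
      if (x:ℕ) + (y:ℕ) < d + 1 then (x:ℕ) + (y:ℕ) else (x:ℕ) + (y:ℕ) - (d+1) := by
  rw [Fin.val_add]
  split
  · exact Nat.mod_eq_of_lt (by omega)
  · rw [Nat.mod_eq_sub_mod (by omega)]
    exact Nat.mod_eq_of_lt (by have := x.isLt; have := y.isLt; omega)

open scoped Fin.CommRing in
lemma exists_rot (m d : ℕ) (hm : 0 < m) (A : Fin (d+1) → ℤ) (hA : Dset m d A)
    (l : ℤ) (p : Fin (d+1))
    (hmono : ∀ i : Fin d,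
      (A (i.castSucc + p) - l) % (m:ℤ) < (A (i.succ + p) - l) % (m:ℤ)) :
    ∃ e : ℤ, ∀ i : Fin (d+1), Rrot m d e A i = l + (A (i + p) - l) % (m:ℤ) := by
  have hm' : (0:ℤ) < (m:ℤ) := by exact_mod_cast hm
  obtain ⟨k, r, hkey, hr0, hr1, hrdef⟩ :
      ∃ (k r : Fin (d+1) → ℤ), (∀ i, A (i + p) = l + (m:ℤ) * k i + r i) ∧
        (∀ i, 0 ≤ r i) ∧ (∀ i, r i < m) ∧ (∀ i, r i = (A (i + p) - l) % (m:ℤ)) :=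
    ⟨fun i => (A (i + p) - l) / (m:ℤ), fun i => (A (i + p) - l) % (m:ℤ),
      fun i => by
        have h := Int.mul_ediv_add_emod (A (i + p) - l) (m:ℤ)
        show A (i + p) = l + (m:ℤ) * ((A (i + p) - l) / (m:ℤ)) + (A (i + p) - l) % (m:ℤ)
        omega,
      fun i => Int.emod_nonneg _ (ne_of_gt hm'),
      fun i => Int.emod_lt_of_pos _ hm',
      fun i => rfl⟩
  have hmono' : ∀ i : Fin d, r i.castSucc < r i.succ := fun i => by
    rw [hrdef, hrdef]; exact hmono i
  have mono := (Dset_strictMono hA).monotone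
  have hub : ∀ u : Fin (d+1), A u ≤ A 0 + m - 2 := fun u =>
    le_trans (mono (Fin.le_last u)) (by have := hA.2; omega)
  have hlb : ∀ u : Fin (d+1), A 0 ≤ A u := fun u => mono (Fin.zero_le u)
  have hadd : ∀ i : Fin d, i.succ + p = (i.castSucc + p) + 1 := fun i => by
    rw [← Fin.coeSucc_eq_succ]; ring
  have hstep : ∀ i : Fin d,
      (i.castSucc + p = Fin.last d → k i.succ = k i.castSucc - 1) ∧
      (i.castSucc + p ≠ Fin.last d → k i.succ = k i.castSucc) := by
    intro i
    constructor
    · intro ha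
      have h0 : i.succ + p = 0 := by rw [hadd i, ha, Fin.last_add_one]
      have e1 := hkey i.succ
      rw [h0] at e1
      have e2 := hkey i.castSucc
      rw [ha] at e2
      have hmx : (m:ℤ) * (k i.succ - k i.castSucc + 1) =
          (A 0 - A (Fin.last d)) - (r i.succ - r i.castSucc) + m := by
        linear_combination e2 - e1
      have hb1 := hA.2
      have hb2 := hlb (Fin.last d)
      have hΔ1 := hmono' i
      have hΔ2 := hr0 i.castSucc
      have hΔ3 := hr1 i.succ
      have hband := int_band (m:ℤ) (k i.succ - k i.castSucc + 1) hm'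
        (by omega) (by omega)
      omega
    · intro ha
      have hlt : ((i.castSucc + p : Fin (d+1)) : ℕ) < d := by
        have h1 : ((i.castSucc + p : Fin (d+1)) : ℕ) < d + 1 := (i.castSucc + p).isLt
        have h2 : ((i.castSucc + p : Fin (d+1)) : ℕ) ≠ d := by
          intro hh
          exact ha (Fin.ext (by rw [hh, Fin.val_last]))
        omega
      have hcs : Fin.castSucc ⟨((i.castSucc + p : Fin (d+1)) : ℕ), hlt⟩ = i.castSucc + p :=
        Fin.ext (by simp)
      have hsc : Fin.succ ⟨((i.castSucc + p : Fin (d+1)) : ℕ), hlt⟩ = (i.castSucc + p) + 1 := by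
        apply Fin.ext
        rw [Fin.val_succ, Fin.val_add_one]
        rw [if_neg ha]
      have hgap := hA.1 ⟨((i.castSucc + p : Fin (d+1)) : ℕ), hlt⟩
      rw [hcs, hsc] at hgap
      have e1 := hkey i.succ
      rw [hadd i] at e1
      have e2 := hkey i.castSucc
      have hup : A ((i.castSucc + p) + 1) ≤ A (i.castSucc + p) + m - 2 :=
        le_trans (hub _) (by have := hlb (i.castSucc + p); omega)
      have hmx : (m:ℤ) * (k i.succ - k i.castSucc) =
          (A ((i.castSucc + p) + 1) - A (i.castSucc + p)) - (r i.succ - r i.castSucc) := by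
        linear_combination e2 - e1
      have hΔ1 := hmono' i
      have hΔ2 := hr0 i.castSucc
      have hΔ3 := hr1 i.succ
      have hband := int_band (m:ℤ) (k i.succ - k i.castSucc) hm'
        (by omega) (by omega)
      omega
  have hk0 : ∀ i : Fin (d+1), k i = k 0 - (if d + 1 ≤ (i:ℕ) + (p:ℕ) then 1 else 0) := by
    intro i
    induction i using Fin.induction with
    | zero =>
      rw [if_neg (by have := p.isLt; simp only [Fin.val_zero]; omega)]
      ring
    | succ i ih =>
      by_cases ha : i.castSucc + p = Fin.last d
      · have hcv : ((i.castSucc + p : Fin (d+1)) : ℕ) = d := by rw [ha, Fin.val_last]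
        rw [fin_add_val] at hcv
        have hi := i.isLt
        have hp := p.isLt
        have hsum : (i:ℕ) + (p:ℕ) = d := by
          simp only [Fin.coe_castSucc] at hcv
          split at hcv <;> omega
        rw [(hstep i).1 ha, ih]
        rw [if_neg (by simp only [Fin.coe_castSucc]; omega),
          if_pos (by simp only [Fin.val_succ]; omega)]
        ring
      · have hsum : (i:ℕ) + (p:ℕ) ≠ d := by
          intro hh
          apply ha
          apply Fin.ext
          rw [fin_add_val, Fin.val_last]
          simp only [Fin.coe_castSucc]
          rw [if_pos (by omega)]
          exact hh
        rw [(hstep i).2 ha, ih]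
        congr 1
        have hi := i.isLt
        rcases le_or_gt (d+1) ((i:ℕ) + (p:ℕ)) with hc | hc
        · rw [if_pos (by simp only [Fin.coe_castSucc]; omega),
            if_pos (by simp only [Fin.val_succ]; omega)]
        · rw [if_neg (by simp only [Fin.coe_castSucc]; omega),
            if_neg (by simp only [Fin.val_succ]; omega)]
  refine ⟨(p:ℤ) - ((d:ℤ)+1) * k 0, fun i => ?_⟩
  rw [← hrdef]
  rw [Rrot_apply_eq_Rval]
  have hsplit : ((i:ℕ):ℤ) + ((p:ℤ) - ((d:ℤ)+1) * k 0) =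
      (((i:ℕ):ℤ) + ((p:ℕ):ℤ)) + ((d:ℤ)+1) * (-(k 0)) := by push_cast; ring
  rw [hsplit, Rval_shift]
  have hi := i.isLt
  have hp := p.isLt
  have hval := fin_add_val d i p
  have hneg : (m:ℤ) * (-(k 0)) = -((m:ℤ) * k 0) := by ring
  rcases lt_or_ge ((i:ℕ) + (p:ℕ)) (d+1) with hc | hc
  · rw [if_pos hc] at hval
    have hsm : Rval m d A (((i:ℕ):ℤ) + ((p:ℕ):ℤ)) = A (i + p) := by
      rw [Rval_small' m d A _ (by positivity) (by omega)]
      apply congrArg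
      apply Fin.ext
      show ((((i:ℕ):ℤ) + ((p:ℕ):ℤ)).toNat) = ((i + p : Fin (d+1)) : ℕ)
      omega
    have hki : k i = k 0 := by rw [hk0 i, if_neg (by omega)]; ring
    have hkk : (m:ℤ) * k i = (m:ℤ) * k 0 := by rw [hki]
    have hkey' := hkey i
    rw [hsm]
    omega
  · rw [if_neg (by omega)] at hval
    have hsplit2 : (((i:ℕ):ℤ) + ((p:ℕ):ℤ)) =
        ((((i:ℕ) + (p:ℕ) - (d+1) : ℕ)):ℤ) + ((d:ℤ)+1) * 1 := by
      have : (((((i:ℕ) + (p:ℕ) - (d+1) : ℕ))):ℤ) = ((i:ℕ):ℤ) + ((p:ℕ):ℤ) - ((d:ℤ)+1) := by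
        omega
      rw [this]; ring
    rw [hsplit2, Rval_shift]
    have hsm : Rval m d A ((((i:ℕ) + (p:ℕ) - (d+1) : ℕ)):ℤ) = A (i + p) := by
      rw [Rval_small' m d A _ (by positivity) (by omega)]
      apply congrArg
      apply Fin.ext
      show (((((i:ℕ) + (p:ℕ) - (d+1) : ℕ)):ℤ).toNat) = ((i + p : Fin (d+1)) : ℕ)
      omega
    have hki : k i = k 0 - 1 := by rw [hk0 i, if_pos (by omega)]
    have hkk : (m:ℤ) * k i = (m:ℤ) * k 0 - m := by rw [hki]; ring
    have hkey' := hkey i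
    rw [hsm]
    omega

/-! ### Intertwining implies strict componentwise comparison (up to swap) -/

lemma intertw_lt (m d : ℕ) (hm : 0 < m) (A B : Fin (d+1) → ℤ)
    (hA : Dset m d A) (hB : Dset m d B)
    (h : Intertw m d (fun j => pimod m (A j)) (fun j => pimod m (B j))) :
    (∀ j, A j < B j) ∨ (∀ j, B j < A j) := by
  have hm' : (0:ℤ) < (m:ℤ) := by exact_mod_cast hm
  obtain ⟨l, p, q, h1, h2⟩ := h
  have h1' : ∀ i : Fin (d+1), (A (i + p) - l) % (m:ℤ) < (B (i + q) - l) % (m:ℤ) := by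
    intro i
    have := h1 i
    rwa [pimod_emod, pimod_emod] at this
  have h2' : ∀ i : Fin d,
      (B (i.castSucc + q) - l) % (m:ℤ) < (A (i.succ + p) - l) % (m:ℤ) := by
    intro i
    have := h2 i
    rwa [pimod_emod, pimod_emod] at this
  have hmonoA : ∀ i : Fin d,
      (A (i.castSucc + p) - l) % (m:ℤ) < (A (i.succ + p) - l) % (m:ℤ) := fun i =>
    lt_trans (h1' i.castSucc) (h2' i)
  have hmonoB : ∀ i : Fin d,
      (B (i.castSucc + q) - l) % (m:ℤ) < (B (i.succ + q) - l) % (m:ℤ) := fun i =>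
    lt_trans (h2' i) (h1' i.succ)
  obtain ⟨eA, heA⟩ := exists_rot m d hm A hA l p hmonoA
  obtain ⟨eB, heB⟩ := exists_rot m d hm B hB l q hmonoB
  have h3 : ∀ i, Rrot m d eA A i < Rrot m d eB B i := by
    intro i
    rw [heA, heB]
    have := h1' i
    omega
  have h4 : ∀ i, Rrot m d eB B i < Rrot m d (eA + 1) A i := by
    intro i
    induction i using Fin.lastCases with
    | last =>
      rw [Rrot_last, heB, heA]
      have hb1 : (B (Fin.last d + q) - l) % (m:ℤ) < m := Int.emod_lt_of_pos _ hm'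
      have hb2 : 0 ≤ (A (0 + p) - l) % (m:ℤ) := Int.emod_nonneg _ (ne_of_gt hm')
      omega
    | cast i =>
      rw [Rrot_succ_cast, heB, heA]
      have := h2' i
      omega
  have h5 : ∀ i, Rrot m d (-eB + eA) A i < B i := by
    intro i
    have := Rrot_lt_of_lt m d (-eB) h3 i
    rw [show Rrot m d (-eB) (Rrot m d eA A) = Rrot m d (-eB + eA) A from Rrot_comp ..,
      show Rrot m d (-eB) (Rrot m d eB B) = Rrot m d (-eB + eB) B from Rrot_comp ..] at this
    rwa [show -eB + eB = 0 by ring, Rrot_zero] at this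
  have h6 : ∀ i, B i < Rrot m d (-eB + eA + 1) A i := by
    intro i
    have := Rrot_lt_of_lt m d (-eB) h4 i
    rw [show Rrot m d (-eB) (Rrot m d eB B) = Rrot m d (-eB + eB) B from Rrot_comp ..,
      show Rrot m d (-eB) (Rrot m d (eA + 1) A) = Rrot m d (-eB + (eA + 1)) A from
        Rrot_comp ..] at this
    rw [show -eB + eB = 0 by ring, Rrot_zero, show -eB + (eA + 1) = -eB + eA + 1 by ring]
      at this
    exact this
  rcases le_or_gt 0 (-eB + eA) with hf | hf
  · left
    intro j
    exact lt_of_le_of_lt (Rrot_ge_of_nonneg hA hf j) (h5 j)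
  · right
    intro j
    have hf1 : -eB + eA + 1 ≤ 0 := by omega
    exact lt_of_lt_of_le (h6 j) (Rrot_le_of_nonpos hA hf1 j)

/-! ### Reachability in the quiver -/

open scoped Fin.NatCast Fin.CommRing in
lemma reach_aux (m d : ℕ) (hm : 2*d+3 ≤ m) :
    ∀ N : ℕ, ∀ A B : Fin (d+1) → ℤ, Dset m d A → Dset m d B → (∀ j, A j ≤ B j) →
      (∑ j, (B j - A j)) ≤ (N:ℤ) → Relation.ReflTransGen (TArrow m d) A B := by
  intro N
  induction N with
  | zero =>
    intro A B hA hB hle hsum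
    have hnn : ∀ j ∈ Finset.univ, (0:ℤ) ≤ B j - A j := fun j _ => by have := hle j; omega
    have h0 : ∑ j, (B j - A j) = 0 := le_antisymm (by exact_mod_cast hsum) (Finset.sum_nonneg hnn)
    have hz := (Finset.sum_eq_zero_iff_of_nonneg hnn).mp h0
    have hAB : A = B := funext fun j => by have := hz j (Finset.mem_univ j); omega
    rw [hAB]
  | succ N ih =>
    intro A B hA hB hle hsum
    by_cases hAB : A = B
    · rw [hAB]
    · have hne : ∃ j, A j < B j := by
        by_contra hcon
        push_neg at hcon
        exact hAB (funext fun j => le_antisymm (hle j) (hcon j))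
      obtain ⟨j₀, hj₀⟩ := hne
      have hgood : ∃ i : Fin (d+1), A i < B i ∧
          ((∃ h : (i:ℕ) < d, A i + 3 ≤ A ⟨(i:ℕ)+1, by omega⟩) ∨
           ((i:ℕ) = d ∧ A i + 3 ≤ A 0 + m)) := by
        by_contra hcon
        push_neg at hcon
        -- every deficient index has gap exactly 2; show closure under +1
        have hclos : ∀ i : Fin (d+1), A i < B i → A (i+1) < B (i+1) := by
          intro i hi
          obtain ⟨hc1, hc2⟩ := hcon i hi
          by_cases hil : (i:ℕ) < d
          · have hgap2 : A ⟨(i:ℕ)+1, by omega⟩ ≤ A i + 2 := by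
              have := hc1 hil; omega
            have hA2 := hA.1 ⟨(i:ℕ), hil⟩
            have hB2 := hB.1 ⟨(i:ℕ), hil⟩
            have hcs : (Fin.castSucc ⟨(i:ℕ), hil⟩ : Fin (d+1)) = i := Fin.ext (by simp)
            have hsc : (Fin.succ ⟨(i:ℕ), hil⟩ : Fin (d+1)) = i + 1 := by
              apply Fin.ext
              rw [Fin.val_succ, Fin.val_add_one, if_neg (by
                intro hh; rw [hh, Fin.val_last] at hil; omega)]
            rw [hcs, hsc] at hA2 hB2
            have hgap2' : A (i+1) ≤ A i + 2 := by
              have he : (⟨(i:ℕ)+1, by omega⟩ : Fin (d+1)) = i + 1 := by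
                apply Fin.ext
                rw [Fin.val_add_one, if_neg (by
                  intro hh; rw [hh, Fin.val_last] at hil; omega)]
              rw [he] at hgap2
              exact hgap2
            omega
          · have hid : (i:ℕ) = d := by have := i.isLt; omega
            have hgap2 : A 0 + m ≤ A i + 2 := by
              have := hc2 hid; omega
            have hil' : i = Fin.last d := Fin.ext (by rw [Fin.val_last]; exact hid)
            have hB2 := hB.2
            have h10 : i + 1 = 0 := by rw [hil', Fin.last_add_one]
            rw [h10]
            rw [hil'] at hgap2
            rw [hil'] at hi
            omega
        have hall : ∀ t : ℕ, A (j₀ + (t : Fin (d+1))) < B (j₀ + (t : Fin (d+1))) := by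
          intro t
          induction t with
          | zero => simpa using hj₀
          | succ t iht =>
            have hcast : ((t+1 : ℕ) : Fin (d+1)) = ((t : ℕ) : Fin (d+1)) + 1 := by
              push_cast
              ring
            rw [hcast, ← add_assoc]
            exact hclos _ iht
        have halli : ∀ i : Fin (d+1), A i < B i := by
          intro i
          have h1 : j₀ + ((((i - j₀ : Fin (d+1)) : ℕ) : Fin (d+1))) = i := by
            rw [Fin.cast_val_eq_self]
            ring
          have := hall ((i - j₀ : Fin (d+1)) : ℕ)
          rwa [h1] at this
        -- all gaps are 2, so A is an arithmetic progression with step 2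
        have hlin : ∀ j : Fin (d+1), A j = A 0 + 2*((j:ℕ):ℤ) := by
          intro j
          induction j using Fin.induction with
          | zero => simp
          | succ i ihi =>
            obtain ⟨hc1, _⟩ := hcon i.castSucc (halli i.castSucc)
            have hil : ((i.castSucc : Fin (d+1)):ℕ) < d := by
              simp only [Fin.coe_castSucc]; exact i.isLt
            have hgap2 : A ⟨((i.castSucc : Fin (d+1)):ℕ)+1, by omega⟩ ≤ A i.castSucc + 2 := by
              have := hc1 hil; omega
            have hA2 := hA.1 i
            have he : (⟨((i.castSucc : Fin (d+1)):ℕ)+1, by omega⟩ : Fin (d+1)) = i.succ :=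
              Fin.ext (by simp)
            rw [he] at hgap2
            have hv : ((i.succ:ℕ):ℤ) = ((i.castSucc:ℕ):ℤ) + 1 := by
              simp [Fin.val_succ, Fin.coe_castSucc]
            omega
        obtain ⟨_, hc2⟩ := hcon (Fin.last d) (halli (Fin.last d))
        have hgap2 : A 0 + m ≤ A (Fin.last d) + 2 := by
          have := hc2 (Fin.val_last d); omega
        have := hlin (Fin.last d)
        rw [Fin.val_last] at this
        omega
      obtain ⟨i, hdef, hslack⟩ := hgood
      set A' : Fin (d+1) → ℤ := fun j => if j = i then A j + 1 else A j with hA'def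
      have hA'i : A' i = A i + 1 := by rw [hA'def]; simp
      have hA'ne : ∀ j, j ≠ i → A' j = A j := fun j hj => by rw [hA'def]; simp [hj]
      have hA' : Dset m d A' := by
        constructor
        · intro i'
          have hvne : i'.castSucc ≠ i'.succ := by
            intro hh
            have := congrArg Fin.val hh
            rw [Fin.coe_castSucc, Fin.val_succ] at this
            omega
          by_cases hc1 : i'.castSucc = i
          · have hc2 : i'.succ ≠ i := fun hh => hvne (hc1.trans hh.symm)
            rw [hc1, hA'i, hA'ne _ hc2]
            have hil : (i:ℕ) < d := by
              rw [← hc1, Fin.coe_castSucc]; exact i'.isLt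
            rcases hslack with ⟨h, hs⟩ | ⟨h, hs⟩
            · have he : (⟨(i:ℕ)+1, by omega⟩ : Fin (d+1)) = i'.succ := by
                apply Fin.ext
                simp only [Fin.val_succ]
                rw [← hc1, Fin.coe_castSucc]
              rw [he] at hs
              omega
            · omega
          · by_cases hc2 : i'.succ = i
            · rw [hA'ne _ hc1, hc2, hA'i]
              have := hA.1 i'
              rw [hc2] at this
              omega
            · rw [hA'ne _ hc1, hA'ne _ hc2]
              exact hA.1 i'
        · by_cases hl : Fin.last d = i
          · by_cases h0 : (0 : Fin (d+1)) = i
            · have e1 : A' (Fin.last d) = A i + 1 := by rw [hl]; exact hA'i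
              have e2 : A' 0 = A i + 1 := by rw [h0]; exact hA'i
              rw [e1, e2]
              omega
            · have e1 : A' (Fin.last d) = A (Fin.last d) + 1 := by
                rw [hl]
                exact hA'i
              have e2 : A' 0 = A 0 := hA'ne 0 h0
              rw [e1, e2]
              rcases hslack with ⟨h, hs⟩ | ⟨h, hs⟩
              · rw [← hl, Fin.val_last] at h
                omega
              · rw [← hl] at hs
                omega
          · have e1 : A' (Fin.last d) = A (Fin.last d) := hA'ne _ hl
            by_cases h0 : (0 : Fin (d+1)) = i
            · have e2 : A' 0 = A 0 + 1 := by
                rw [h0]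
                exact hA'i
              rw [e1, e2]
              have := hA.2
              omega
            · rw [e1, hA'ne 0 h0]
              exact hA.2
      have harrow : TArrow m d A A' := by
        refine ⟨hA, hA', i, funext fun j => ?_⟩
        rw [Pi.add_apply]
        unfold Evec
        by_cases hj : j = i
        · rw [hj, hA'i]
          simp
        · rw [hA'ne j hj, if_neg hj]
          ring
      have hle' : ∀ j, A' j ≤ B j := by
        intro j
        by_cases hj : j = i
        · rw [hj, hA'i]
          have := hdef
          omega
        · rw [hA'ne j hj]
          exact hle j
      have hsum' : (∑ j, (B j - A' j)) ≤ (N:ℤ) := by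
        have hterm : ∀ j, B j - A' j = (B j - A j) - (if j = i then (1:ℤ) else 0) := by
          intro j
          by_cases hj : j = i
          · rw [hj, hA'i, if_pos rfl]
            ring
          · rw [hA'ne j hj, if_neg hj]
            ring
        calc (∑ j, (B j - A' j))
            = (∑ j, ((B j - A j) - if j = i then (1:ℤ) else 0)) := by
              apply Finset.sum_congr rfl
              intro j _
              exact hterm j
          _ = (∑ j, (B j - A j)) - (∑ j, if j = i then (1:ℤ) else 0) :=
              Finset.sum_sub_distrib ..
          _ = (∑ j, (B j - A j)) - 1 := by
              rw [Finset.sum_ite_eq' Finset.univ i (fun _ => (1:ℤ))]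
              simp
          _ ≤ (N:ℤ) := by
              push_cast at hsum
              omega
      exact Relation.ReflTransGen.head harrow (ih A' B hA' hB hle' hsum')

lemma reach (m d : ℕ) (hm : 2*d+3 ≤ m) (A B : Fin (d+1) → ℤ)
    (hA : Dset m d A) (hB : Dset m d B) (hle : ∀ j, A j ≤ B j) :
    Relation.ReflTransGen (TArrow m d) A B := by
  apply reach_aux m d hm (∑ j, (B j - A j)).toNat A B hA hB hle
  have hnn : (0:ℤ) ≤ ∑ j, (B j - A j) :=
    Finset.sum_nonneg (fun j _ => by have := hle j; omega)
  omega

/-! ### No strict componentwise comparison inside a slice -/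

lemma no_between (m d : ℕ) (S : Set (Fin (d+1) → ℤ))
    (hS : ∀ X ∈ S, Dset m d X)
    (horbit : ∀ A, Dset m d A → ∃! k : ℤ, (fun j => A j + k) ∈ S)
    (hconv : ∀ A ∈ S, ∀ B ∈ S, ∀ X,
      Relation.ReflTransGen (TArrow m d) A X →
      Relation.ReflTransGen (TArrow m d) X B → X ∈ S)
    (A : Fin (d+1) → ℤ) (hAS : A ∈ S) (B : Fin (d+1) → ℤ) (hBS : B ∈ S)
    (hlt : ∀ j, A j < B j) : False := by
  have hA := hS A hAS
  have hB := hS B hBS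
  obtain ⟨k, hk, huniq⟩ := horbit A hA
  have e0 : (0:ℤ) = k := huniq 0 (by simpa using hAS)
  by_cases hm3 : 2*d + 3 ≤ m
  · have hA1 : Dset m d (fun j => A j + 1) := Dset_shift hA 1
    have hpath1 : Relation.ReflTransGen (TArrow m d) A (fun j => A j + 1) :=
      reach m d hm3 A _ hA hA1 (fun j => by show A j ≤ A j + 1; omega)
    have hpath2 : Relation.ReflTransGen (TArrow m d) (fun j => A j + 1) B :=
      reach m d hm3 _ B hA1 hB (fun j => by show A j + 1 ≤ B j; have := hlt j; omega)
    have hA1S : (fun j => A j + 1) ∈ S := hconv A hAS B hBS _ hpath1 hpath2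
    have e1 : (1:ℤ) = k := huniq 1 hA1S
    omega
  · have hm2 : 2*d + 2 ≤ m := Dset_m_ge hA
    have hmeq : m = 2*d + 2 := by omega
    have linA : ∀ j : Fin (d+1), A j = A 0 + 2*((j:ℕ):ℤ) := by
      intro j
      have h1 := Dset_lo hA j
      have h2 := Dset_hi hA j
      have h3 := hA.2
      omega
    have linB : ∀ j : Fin (d+1), B j = B 0 + 2*((j:ℕ):ℤ) := by
      intro j
      have h1 := Dset_lo hB j
      have h2 := Dset_hi hB j
      have h3 := hB.2
      omega
    have ec : (B 0 - A 0) = k := by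
      apply huniq
      have hfun : (fun j => A j + (B 0 - A 0)) = B := funext fun j => by
        rw [linA j, linB j]; ring
      rw [hfun]
      exact hBS
    have := hlt 0
    omega

/-- If S is a slice of Q̃^{(d,n)} (one vertex from each ν_d-orbit,
and convex), then π(S_0) is a pairwise non-intertwining collection of d-simplices
whose cardinality equals the number of ν_d-orbits (hence gives a triangulation of
C(n+2d+1, 2d)). -/
theorem slice_gives_triangulation (n d : ℕ) (S : Set (Fin (d+1) → ℤ))
    (hS : ∀ X ∈ S, Dset (n + 2*d + 1) d X)
    (horbit : ∀ A, Dset (n + 2*d + 1) d A → ∃! k : ℤ, (fun j => A j + k) ∈ S)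
    (hconv : ∀ A ∈ S, ∀ B ∈ S, ∀ X,
      Relation.ReflTransGen (TArrow (n + 2*d + 1) d) A X →
      Relation.ReflTransGen (TArrow (n + 2*d + 1) d) X B → X ∈ S) :
    (∀ A ∈ S, ∀ B ∈ S, A ≠ B →
      ¬ Intertw (n + 2*d + 1) d (fun j => pimod (n + 2*d + 1) (A j))
        (fun j => pimod (n + 2*d + 1) (B j))) ∧
    Nat.card S = Nat.card (Quotient (nuSetoid (n + 2*d + 1) d)) := by
  constructor
  · intro A hAS B hBS hne hint
    rcases intertw_lt (n + 2*d + 1) d (by omega) A B (hS A hAS) (hS B hBS) hint with h | h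
    · exact no_between (n + 2*d + 1) d S hS horbit hconv A hAS B hBS h
    · exact no_between (n + 2*d + 1) d S hS horbit hconv B hBS A hAS h
  · have hbij : Function.Bijective
        (fun a : S => Quotient.mk (nuSetoid (n + 2*d + 1) d) ⟨a.1, hS a.1 a.2⟩) := by
      constructor
      · rintro ⟨a, ha⟩ ⟨b, hb⟩ hab
        obtain ⟨k, hk⟩ := Quotient.exact hab
        obtain ⟨k', hk', huniq⟩ := horbit a (hS a ha)
        have e0 : (0:ℤ) = k' := huniq 0 (by simpa using ha)
        have ek : k = k' := by
          apply huniq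
          have hfun : (fun j => a j + k) = b := funext fun j => (hk j).symm
          rw [hfun]
          exact hb
        have hab' : a = b := funext fun j => by
          have h2 : b j = a j + k := hk j
          omega
        exact Subtype.ext hab'
      · intro c
        induction c using Quotient.ind with
        | _ x =>
          obtain ⟨C, hC⟩ := x
          obtain ⟨k, hk, _⟩ := horbit C hC
          refine ⟨⟨fun j => C j + k, hk⟩, ?_⟩
          apply Quotient.sound
          exact ⟨-k, fun j => by show C j = (C j + k) + (-k); ring⟩
    exact Nat.card_eq_of_bijective _ hbij
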